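/- Let T be a finite tree with N vertices and let k ≥ 1 be an integer dividing N. Then there is at most one set S of k−1 edges of T such that every connected component of the forest T∖S has exactly N/k vertices. -/

import Mathlib

open SimpleGraph

private lemma aux_dvd {V : Type*} [Fintype V] (G : SimpleGraph V) (m : ℕ)
    (hm : ∀ c : G.ConnectedComponent, c.supp.ncard = m)
    (A : Set V) (hA : ∀ ⦃x y⦄, x ∈ A → G.Reachable x y → y ∈ A) :
    m ∣ A.ncard := by
  classical
  rw [Set.ncard_eq_toFinset_card']
  rw [Finset.card_eq_sum_card_fiberwise (f := G.connectedComponentMk)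
    (t := A.toFinset.image G.connectedComponentMk) (fun x hx => Finset.mem_image_of_mem _ hx)]
  have key : ∀ c ∈ A.toFinset.image G.connectedComponentMk,
      (A.toFinset.filter (fun x => G.connectedComponentMk x = c)).card = m := by
    intro c hc
    obtain ⟨x, hx, rfl⟩ := Finset.mem_image.mp hc
    rw [Set.mem_toFinset] at hx
    have heq : (A.toFinset.filter
        (fun y => G.connectedComponentMk y = G.connectedComponentMk x))
        = (G.connectedComponentMk x).supp.toFinset := by
      ext y
      simp only [Finset.mem_filter, Set.mem_toFinset, ConnectedComponent.mem_supp_iff]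
      constructor
      · rintro ⟨-, h⟩; exact h
      · intro h; exact ⟨hA hx (ConnectedComponent.exact h).symm, h⟩
    rw [heq, ← Set.ncard_eq_toFinset_card', hm]
  rw [Finset.sum_congr rfl key, Finset.sum_const, smul_eq_mul]
  exact dvd_mul_left m _

private lemma aux_char {V : Type*} [Fintype V] {T : SimpleGraph V} (hT : T.IsTree) (m : ℕ)
    {S : Set (Sym2 V)} (hsub : S ⊆ T.edgeSet)
    (hcomp : ∀ c : (fromEdgeSet (T.edgeSet \ S)).ConnectedComponent, c.supp.ncard = m)
    {u v : V} (huv : T.Adj u v) :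
    s(u, v) ∈ S ↔ m ∣ {w | (T \ fromEdgeSet {s(u, v)}).Reachable u w}.ncard := by
  classical
  set G := fromEdgeSet (T.edgeSet \ S) with hG
  set D := T \ fromEdgeSet {s(u, v)} with hD
  set A := {w | D.Reachable u w} with hA
  have hGT : ∀ ⦃x y : V⦄, G.Adj x y → T.Adj x y := by
    intro x y hxy
    rw [hG, fromEdgeSet_adj] at hxy
    exact T.mem_edgeSet.mp hxy.1.1
  have huA : u ∈ A := Reachable.refl u
  have hvA : v ∉ A := by
    have hb : T.IsBridge s(u, v) :=
      (isAcyclic_iff_forall_adj_isBridge.mp hT.IsAcyclic) huv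
    exact isBridge_iff.mp hb
  have hcross : ∀ ⦃a b : V⦄, T.Adj a b → a ∈ A → b ∉ A → s(a, b) = s(u, v) := by
    intro a b hab ha hb
    by_contra hne
    exact hb (ha.trans (Adj.reachable ⟨hab, by simp [fromEdgeSet_adj, hne]⟩))
  constructor
  · intro heS
    refine aux_dvd G m hcomp A ?_
    intro x y hx hxy
    refine hx.trans (hxy.mono ?_)
    intro a b hab
    rw [hG, fromEdgeSet_adj] at hab
    refine ⟨T.mem_edgeSet.mp hab.1.1, ?_⟩
    rw [fromEdgeSet_adj]
    rintro ⟨h1, -⟩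
    rw [Set.mem_singleton_iff] at h1
    exact hab.1.2 (h1 ▸ heS)
  · intro hdvdA
    by_contra heS
    have huvG : G.Adj u v := by
      rw [hG, fromEdgeSet_adj]
      exact ⟨⟨T.mem_edgeSet.mpr huv, heS⟩, huv.ne⟩
    set C := (G.connectedComponentMk u).supp with hC
    have hvC : v ∈ C := by
      rw [hC, ConnectedComponent.mem_supp_iff]
      exact ConnectedComponent.sound huvG.reachable.symm
    have hkey : ∀ ⦃x y : V⦄, G.Reachable x y → x ∈ A → y ∉ A → x ∈ C := by
      intro x y hr
      obtain ⟨p⟩ := hr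
      induction p with
      | nil => intro hx hy; exact absurd hx hy
      | @cons x b y h q ih =>
        intro hx hy
        by_cases hb : b ∈ A
        · have hbC : b ∈ C := ih hb hy
          rw [hC, ConnectedComponent.mem_supp_iff] at hbC ⊢
          rw [← hbC]
          exact ConnectedComponent.sound h.reachable
        · have := hcross (hGT h) hx hb
          rw [Sym2.eq_iff] at this
          rcases this with ⟨rfl, rfl⟩ | ⟨rfl, rfl⟩
          · exact rfl
          · exact hvC
    have hCclosed : ∀ ⦃x y : V⦄, G.Reachable x y → (x ∈ C ↔ y ∈ C) := by
      intro x y hr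
      simp only [hC, ConnectedComponent.mem_supp_iff]
      rw [ConnectedComponent.sound hr]
    have hdvdAC : m ∣ (A \ C).ncard := by
      refine aux_dvd G m hcomp (A \ C) ?_
      rintro x y ⟨hxA, hxC⟩ hxy
      have hyC : y ∉ C := fun h => hxC ((hCclosed hxy).mpr h)
      refine ⟨?_, hyC⟩
      by_contra hyA
      exact hxC (hkey hxy hxA hyA)
    have hsplit : (A ∩ C).ncard + (A \ C).ncard = A.ncard :=
      Set.ncard_inter_add_ncard_diff_eq_ncard A C
    have hdvdint : m ∣ (A ∩ C).ncard := by
      have : (A ∩ C).ncard = A.ncard - (A \ C).ncard := by omega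
      rw [this]
      exact Nat.dvd_sub hdvdA hdvdAC
    have hpos : 0 < (A ∩ C).ncard := by
      rw [Set.ncard_pos]
      exact ⟨u, huA, by rw [hC, ConnectedComponent.mem_supp_iff]⟩
    have hlt : (A ∩ C).ncard < m := by
      have : (A ∩ C).ncard < C.ncard := by
        refine Set.ncard_lt_ncard ⟨Set.inter_subset_right, ?_⟩ (Set.toFinite C)
        intro hsub'
        exact hvA (hsub' hvC).1
      rwa [hC, hcomp] at this
    exact absurd (Nat.le_of_dvd hpos hdvdint) (not_le.mpr hlt)

/-- Let `T` be a finite tree with `N` vertices and let `k ≥ 1` divide `N`.  There is at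
most one set `S` of `k − 1` edges of `T` such that every connected component of the
forest `T \ S` (delete the edges of `S`, keep all vertices) has exactly `N/k` vertices. -/
theorem stmt7 {V : Type*} [Fintype V] (T : SimpleGraph V) (hT : T.IsTree)
    (k : ℕ) (hk : 1 ≤ k) (hdvd : k ∣ Fintype.card V) :
    {S : Set (Sym2 V) | S ⊆ T.edgeSet ∧ S.ncard = k - 1 ∧
      ∀ c : (SimpleGraph.fromEdgeSet (T.edgeSet \ S)).ConnectedComponent,
        c.supp.ncard = Fintype.card V / k}.Subsingleton := by
  intro S₁ h₁ S₂ h₂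
  obtain ⟨hs₁, -, hc₁⟩ := h₁
  obtain ⟨hs₂, -, hc₂⟩ := h₂
  ext e
  induction e using Sym2.ind with
  | _ u v =>
    constructor
    · intro h
      have hadj : T.Adj u v := T.mem_edgeSet.mp (hs₁ h)
      exact (aux_char hT _ hs₂ hc₂ hadj).mpr ((aux_char hT _ hs₁ hc₁ hadj).mp h)
    · intro h
      have hadj : T.Adj u v := T.mem_edgeSet.mp (hs₂ h)
      exact (aux_char hT _ hs₁ hc₁ hadj).mpr ((aux_char hT _ hs₂ hc₂ hadj).mp h)
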